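/- Each of the 5 edges of the polygonal chain (0,2)-(0,0)-(2,0)-(2,2)-(1, 2−√3)-(1, 4−√3) in ℝ² has Euclidean length exactly 2, and the chain visits every point of {0,1,2}×{0,1,2}. -/

import Mathlib

noncomputable def pt2 (a b : ℝ) : EuclideanSpace ℝ (Fin 2) := WithLp.toLp 2 ![a, b]

/-- The vertices of the uncrossing covering path `P̌_{3,3}`. -/
noncomputable def Q33 : Fin 6 → EuclideanSpace ℝ (Fin 2) :=
  ![pt2 0 2, pt2 0 0, pt2 2 0, pt2 2 2, pt2 1 (2 - Real.sqrt 3), pt2 1 (4 - Real.sqrt 3)]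

lemma dist_pt2 (a b c d : ℝ) :
    dist (pt2 a b) (pt2 c d) = Real.sqrt ((a - c)^2 + (b - d)^2) := by
  rw [EuclideanSpace.dist_eq, Fin.sum_univ_two]
  simp [pt2, Real.dist_eq, sq_abs]

lemma mem_seg (a b c d x y t : ℝ) (h0 : 0 ≤ t) (h1 : t ≤ 1)
    (hx : x = (1 - t) * a + t * c) (hy : y = (1 - t) * b + t * d) :
    pt2 x y ∈ segment ℝ (pt2 a b) (pt2 c d) := by
  refine ⟨1 - t, t, by linarith, h0, by ring, ?_⟩
  ext i
  fin_cases i <;>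
    simp [pt2, hx, hy, PiLp.smul_apply, PiLp.add_apply, smul_eq_mul]

/-- Each of the 5 edges of the chain `(0,2)-(0,0)-(2,0)-(2,2)-(1, 2−√3)-(1, 4−√3)` has
Euclidean length exactly `2`, and the chain visits every point of `{0,1,2} × {0,1,2}`. -/
theorem stmt9 :
    (∀ i : Fin 5, dist (Q33 i.castSucc) (Q33 i.succ) = 2) ∧
    (∀ a b : ℝ, a ∈ ({0, 1, 2} : Set ℝ) → b ∈ ({0, 1, 2} : Set ℝ) →
      ∃ i : Fin 5, pt2 a b ∈ segment ℝ (Q33 i.castSucc) (Q33 i.succ)) := by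
  have h3 := Real.sq_sqrt (by norm_num : (0:ℝ) ≤ 3)
  have h4 : (2:ℝ) = Real.sqrt 4 := by
    rw [show (4:ℝ) = 2^2 by norm_num, Real.sqrt_sq (by norm_num : (0:ℝ) ≤ 2)]
  have hlt : Real.sqrt 3 < 2 := by nlinarith [Real.sqrt_nonneg 3]
  have hgt : (1:ℝ) < Real.sqrt 3 := by nlinarith [Real.sqrt_nonneg 3]
  constructor
  · intro i
    fin_cases i
    · show dist (pt2 0 2) (pt2 0 0) = 2
      rw [dist_pt2, h4]; congr 1; nlinarith [h3]
    · show dist (pt2 0 0) (pt2 2 0) = 2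
      rw [dist_pt2, h4]; congr 1; nlinarith [h3]
    · show dist (pt2 2 0) (pt2 2 2) = 2
      rw [dist_pt2, h4]; congr 1; nlinarith [h3]
    · show dist (pt2 2 2) (pt2 1 (2 - Real.sqrt 3)) = 2
      rw [dist_pt2, h4]; congr 1; nlinarith [h3]
    · show dist (pt2 1 (2 - Real.sqrt 3)) (pt2 1 (4 - Real.sqrt 3)) = 2
      rw [dist_pt2, h4]; congr 1; nlinarith [h3]
  · intro a b ha hb
    have hseg : ∀ i : Fin 5, Q33 i.castSucc = Q33 i.castSucc := fun _ => rfl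
    simp only [Set.mem_insert_iff, Set.mem_singleton_iff] at ha hb
    have Q0 : Q33 (0:Fin 5).castSucc = pt2 0 2 := rfl
    have Q1 : Q33 (0:Fin 5).succ = pt2 0 0 := rfl
    rcases ha with rfl | rfl | rfl
    · -- a = 0 : on segment (0,2)-(0,0), i = 0
      refine ⟨0, ?_⟩
      show pt2 0 b ∈ segment ℝ (pt2 0 2) (pt2 0 0)
      rcases hb with rfl | rfl | rfl
      · exact mem_seg 0 2 0 0 0 0 1 (by norm_num) le_rfl (by ring) (by ring)
      · exact mem_seg 0 2 0 0 0 1 (1/2) (by norm_num) (by norm_num) (by ring) (by ring)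
      · exact mem_seg 0 2 0 0 0 2 0 le_rfl (by norm_num) (by ring) (by ring)
    · -- a = 1
      rcases hb with rfl | rfl | rfl
      · -- (1,0) on segment (0,0)-(2,0), i = 1
        refine ⟨1, ?_⟩
        show pt2 1 0 ∈ segment ℝ (pt2 0 0) (pt2 2 0)
        exact mem_seg 0 0 2 0 1 0 (1/2) (by norm_num) (by norm_num) (by ring) (by ring)
      · -- (1,1) on segment (1,2-√3)-(1,4-√3), i = 4
        refine ⟨4, ?_⟩
        show pt2 1 1 ∈ segment ℝ (pt2 1 (2 - Real.sqrt 3)) (pt2 1 (4 - Real.sqrt 3))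
        refine mem_seg _ _ _ _ _ _ ((Real.sqrt 3 - 1)/2) (by linarith) (by linarith)
          (by ring) (by ring)
      · -- (1,2)
        refine ⟨4, ?_⟩
        show pt2 1 2 ∈ segment ℝ (pt2 1 (2 - Real.sqrt 3)) (pt2 1 (4 - Real.sqrt 3))
        refine mem_seg _ _ _ _ _ _ (Real.sqrt 3 / 2) (by positivity) (by linarith)
          (by ring) (by ring)
    · -- a = 2 : on segment (2,0)-(2,2), i = 2
      refine ⟨2, ?_⟩
      show pt2 2 b ∈ segment ℝ (pt2 2 0) (pt2 2 2)
      rcases hb with rfl | rfl | rfl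
      · exact mem_seg 2 0 2 2 2 0 0 le_rfl (by norm_num) (by ring) (by ring)
      · exact mem_seg 2 0 2 2 2 1 (1/2) (by norm_num) (by norm_num) (by ring) (by ring)
      · exact mem_seg 2 0 2 2 2 2 1 (by norm_num) le_rfl (by ring) (by ring)
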